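/- Let S be a type of states with transition relations T_c, T_u : S → S → Prop, initial states I : Set S and safe states P : Set S. Define Bad = {s : S | ∃ t, t ∉ P ∧ ReflTransGen T_u s t}, and define the canonical supervisor T* by T* s t ↔ (T_u s t ∨ (T_c s t ∧ t ∉ Bad)). Suppose I ∩ Bad = ∅. Then the set of states reachable from I under T* equals the union, over all safe supervisors T^S (relations with T_u s t → T^S s t, T^S s t → (T_c s t ∨ T_u s t), and all states reachable from I under T^S lying in P), of the set of states reachable from I under T^S. -/

import Mathlib

theorem pdrc_canonical_reachable_eq_union {S : Type*} (Tc Tu : S → S → Prop)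
    (I P : Set S) (Bad : Set S)
    (hBad : Bad = {s : S | ∃ t, t ∉ P ∧ Relation.ReflTransGen Tu s t})
    (Tstar : S → S → Prop)
    (hTstar : ∀ s t, Tstar s t ↔ (Tu s t ∨ (Tc s t ∧ t ∉ Bad)))
    (hI : I ∩ Bad = ∅) :
    {t : S | ∃ s ∈ I, Relation.ReflTransGen Tstar s t} =
      ⋃ TS : S → S → Prop,
        ⋃ (_ : (∀ s t, Tu s t → TS s t) ∧
               (∀ s t, TS s t → (Tc s t ∨ Tu s t)) ∧
               (∀ t : S, (∃ s ∈ I, Relation.ReflTransGen TS s t) → t ∈ P)),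
          {t : S | ∃ s ∈ I, Relation.ReflTransGen TS s t} := by
  -- Bad is closed backwards under Tu
  have hBadBack : ∀ s t, Tu s t → t ∈ Bad → s ∈ Bad := by
    intro s t hst ht
    rw [hBad] at ht ⊢
    obtain ⟨u, hu, hpath⟩ := ht
    exact ⟨u, hu, Relation.ReflTransGen.head hst hpath⟩
  -- states reachable under Tstar are not in Bad
  have hReachNotBad : ∀ t, (∃ s ∈ I, Relation.ReflTransGen Tstar s t) → t ∉ Bad := by
    rintro t ⟨s, hs, hpath⟩
    induction hpath with
    | refl =>
        intro hb
        exact (Set.eq_empty_iff_forall_notMem.mp hI s) ⟨hs, hb⟩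
    | tail hab hbc ih =>
        rename_i b c
        rcases (hTstar b c).mp hbc with h | ⟨_, hc⟩
        · intro hc; exact ih (hBadBack _ _ h hc)
        · exact hc
  -- Tstar is safe
  have hTstarSafe : ∀ t : S, (∃ s ∈ I, Relation.ReflTransGen Tstar s t) → t ∈ P := by
    intro t ht
    by_contra hp
    exact hReachNotBad t ht (by rw [hBad]; exact ⟨t, hp, Relation.ReflTransGen.refl⟩)
  ext t
  simp only [Set.mem_setOf_eq, Set.mem_iUnion]
  constructor
  · intro ht
    refine ⟨Tstar, ⟨?_, ?_, hTstarSafe⟩, ht⟩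
    · intro s t h; exact (hTstar s t).mpr (Or.inl h)
    · intro s t h; rcases (hTstar s t).mp h with h | ⟨h, _⟩
      exacts [Or.inr h, Or.inl h]
  · rintro ⟨TS, ⟨hTu, hsub, hsafe⟩, s, hs, hpath⟩
    -- reachable states under TS are not Bad
    have hNB : ∀ u, (∃ s ∈ I, Relation.ReflTransGen TS s u) → u ∉ Bad := by
      rintro u hu hb
      rw [hBad] at hb
      obtain ⟨v, hv, hvp⟩ := hb
      obtain ⟨s0, hs0, hpu⟩ := hu
      have : Relation.ReflTransGen TS u v := Relation.ReflTransGen.mono (fun a b h => hTu a b h) u v hvp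
      exact hv (hsafe v ⟨s0, hs0, hpu.trans this⟩)
    refine ⟨s, hs, ?_⟩
    induction hpath with
    | refl => exact Relation.ReflTransGen.refl
    | tail hab hbc ih =>
        rename_i b c
        refine ih.tail ((hTstar b c).mpr ?_)
        rcases hsub _ _ hbc with h | h
        · exact Or.inr ⟨h, hNB c ⟨s, hs, hab.tail hbc⟩⟩
        · exact Or.inl h
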